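/- Let z : ℝ → ℝ be differentiable and P : ℝ → ℝ continuous, with z'(τ) ≤ z(τ)P(τ) for all τ. Suppose ∫_{-∞}^{τ} P(s) ds = -∞ for each τ (i.e., exp(∫_{τ₀}^τ P) → 0 as τ₀ → -∞) and z is bounded as τ → -∞. Then z(τ) ≤ 0 for all τ ∈ ℝ. -/

import Mathlib

/-- Grönwall-type lemma: if `z' ≤ z P`, the exponential factor
`exp(∫_{τ₀}^τ P)` tends to `0` as `τ₀ → -∞`, and `z` is bounded near `-∞`,
then `z ≤ 0` everywhere. -/
theorem stmt13 (z P : ℝ → ℝ) (hz : Differentiable ℝ z) (hP : Continuous P)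
    (hineq : ∀ τ, deriv z τ ≤ z τ * P τ)
    (hexp : ∀ τ : ℝ, Filter.Tendsto (fun τ₀ => Real.exp (∫ s in τ₀..τ, P s))
      Filter.atBot (nhds 0))
    (hbdd : ∃ Cb : ℝ, ∀ᶠ τ in Filter.atBot, |z τ| ≤ Cb) :
    ∀ τ, z τ ≤ 0 := by
  obtain ⟨Cb, hCb⟩ := hbdd
  set g : ℝ → ℝ := fun t => ∫ s in (0:ℝ)..t, P s with hg
  have hgderiv : ∀ t, HasDerivAt g (P t) t := by
    intro t
    exact intervalIntegral.integral_hasDerivAt_right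
      (hP.intervalIntegrable 0 t)
      hP.aestronglyMeasurable.stronglyMeasurableAtFilter hP.continuousAt
  set w : ℝ → ℝ := fun t => z t * Real.exp (-(g t)) with hw
  have hwderiv : ∀ t, HasDerivAt w ((deriv z t - z t * P t) * Real.exp (-(g t))) t := by
    intro t
    have h1 : HasDerivAt (fun t => Real.exp (-(g t))) (-(P t) * Real.exp (-(g t))) t := by
      have := ((hgderiv t).neg).exp
      simpa [mul_comm] using this
    have h2 : HasDerivAt (fun y => z y * Real.exp (-(g y))) _ t := ((hz t).hasDerivAt.mul h1)
    convert h2 using 1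
    ring
  have hwanti : Antitone w := by
    apply antitone_of_deriv_nonpos
    · exact fun t => ((hwderiv t).differentiableAt)
    · intro t
      rw [(hwderiv t).deriv]
      have := sub_nonpos.mpr (hineq t)
      exact mul_nonpos_of_nonpos_of_nonneg this (Real.exp_pos _).le
  intro τ
  have key : ∀ᶠ τ₀ in Filter.atBot, z τ ≤ max Cb 0 * Real.exp (∫ s in τ₀..τ, P s) := by
    filter_upwards [hCb, Filter.eventually_le_atBot τ] with τ₀ hzb hle
    have hwle : w τ ≤ w τ₀ := hwanti hle
    have hsplit : g τ - g τ₀ = ∫ s in τ₀..τ, P s := by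
      have : (∫ s in (0:ℝ)..τ₀, P s) + ∫ s in τ₀..τ, P s = ∫ s in (0:ℝ)..τ, P s :=
        intervalIntegral.integral_add_adjacent_intervals
          (hP.intervalIntegrable 0 τ₀) (hP.intervalIntegrable τ₀ τ)
      simp only [hg]
      linarith
    have h1 : z τ ≤ z τ₀ * Real.exp (g τ - g τ₀) := by
      have := mul_le_mul_of_nonneg_right hwle (Real.exp_pos (g τ)).le
      simp only [hw] at this
      calc z τ = z τ * Real.exp (-(g τ)) * Real.exp (g τ) := by
            rw [mul_assoc, ← Real.exp_add]; simp
        _ ≤ z τ₀ * Real.exp (-(g τ₀)) * Real.exp (g τ) := this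
        _ = z τ₀ * Real.exp (g τ - g τ₀) := by
            rw [mul_assoc, ← Real.exp_add]; ring_nf
    rw [hsplit] at h1
    refine h1.trans (mul_le_mul_of_nonneg_right ?_ (Real.exp_pos _).le)
    exact le_max_of_le_left ((le_abs_self _).trans hzb)
  have hlim : Filter.Tendsto (fun τ₀ => max Cb 0 * Real.exp (∫ s in τ₀..τ, P s))
      Filter.atBot (nhds 0) := by
    simpa using (hexp τ).const_mul (max Cb 0)
  exact ge_of_tendsto hlim key
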